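/- Each of the matrices r₁, r₂, r₃ generating G₃₃₆ maps the lattice Λ = O·e₁ + O·e₂ + O·e₃ into itself, where O = Z[α], e₁ = (0,α,α), e₂ = (0,0,2), e₃ = (1,1,ᾱ). -/
import Mathlib


noncomputable section

def Kalpha : ℂ := (1 + Complex.I * Real.sqrt 7) / 2
def Kalphabar : ℂ := (1 - Complex.I * Real.sqrt 7) / 2

/-- Membership in `𝒪 = ℤ[α] = ℤ + ℤα`. -/
def inO (z : ℂ) : Prop := ∃ m n : ℤ, z = (m : ℂ) + (n : ℂ) * Kalpha

def Ke1 : Fin 3 → ℂ := ![0, Kalpha, Kalpha]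
def Ke2 : Fin 3 → ℂ := ![0, 0, 2]
def Ke3 : Fin 3 → ℂ := ![1, 1, Kalphabar]

/-- Membership in the lattice `Λ = 𝒪e₁ + 𝒪e₂ + 𝒪e₃`. -/
def inLambda (v : Fin 3 → ℂ) : Prop :=
  ∃ c1 c2 c3 : ℂ, inO c1 ∧ inO c2 ∧ inO c3 ∧ v = c1 • Ke1 + c2 • Ke2 + c3 • Ke3

def r1 : Matrix (Fin 3) (Fin 3) ℂ := !![1,0,0; 0,0,1; 0,1,0]
def r2 : Matrix (Fin 3) (Fin 3) ℂ := !![1,0,0; 0,1,0; 0,0,-1]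
def r3 : Matrix (Fin 3) (Fin 3) ℂ :=
  (1/2 : ℂ) • !![1,-1,-Kalpha; -1,1,-Kalpha; -Kalphabar,-Kalphabar,0]

lemma hbar : Kalphabar = 1 - Kalpha := by
  unfold Kalpha Kalphabar; ring

lemma alpha_sq : Kalpha * Kalpha = Kalpha - 2 := by
  unfold Kalpha
  have h7 : ((Real.sqrt 7 : ℝ) : ℂ) ^ 2 = 7 := by
    rw [← Complex.ofReal_pow, Real.sq_sqrt (by norm_num : (0:ℝ) ≤ 7)]
    norm_num
  linear_combination (Complex.I ^ 2 / 4) * h7 + (7 / 4 : ℂ) * Complex.I_sq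

lemma inO_add {a b : ℂ} (ha : inO a) (hb : inO b) : inO (a + b) := by
  obtain ⟨m, n, rfl⟩ := ha; obtain ⟨p, q, rfl⟩ := hb
  exact ⟨m + p, n + q, by push_cast; ring⟩

lemma inO_mul {a b : ℂ} (ha : inO a) (hb : inO b) : inO (a * b) := by
  obtain ⟨m, n, rfl⟩ := ha; obtain ⟨p, q, rfl⟩ := hb
  refine ⟨m * p - 2 * (n * q), m * q + n * p + n * q, ?_⟩
  push_cast
  linear_combination ((n : ℂ) * q) * alpha_sq

lemma inO_neg {a : ℂ} (ha : inO a) : inO (-a) := by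
  obtain ⟨m, n, rfl⟩ := ha; exact ⟨-m, -n, by push_cast; ring⟩

lemma inO_sub {a b : ℂ} (ha : inO a) (hb : inO b) : inO (a - b) := by
  simpa [sub_eq_add_neg] using inO_add ha (inO_neg hb)

lemma inO_one : inO 1 := ⟨1, 0, by push_cast; ring⟩
lemma inO_alpha : inO Kalpha := ⟨0, 1, by push_cast; ring⟩
lemma inO_alphabar : inO Kalphabar := ⟨1, -1, by rw [hbar]; push_cast; ring⟩

/-- Each of `r₁, r₂, r₃` maps `Λ = 𝒪e₁ + 𝒪e₂ + 𝒪e₃` into itself. -/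
theorem generators_preserve_lattice :
    ∀ v : Fin 3 → ℂ, inLambda v →
      inLambda (r1.mulVec v) ∧ inLambda (r2.mulVec v) ∧ inLambda (r3.mulVec v) := by

  rintro v ⟨c1, c2, c3, h1, h2, h3, rfl⟩
  refine ⟨⟨c1 + Kalphabar * c2 - c3, -c2 + Kalpha * c3, c3,
      inO_sub (inO_add h1 (inO_mul inO_alphabar h2)) h3,
      inO_add (inO_neg h2) (inO_mul inO_alpha h3), h3, ?_⟩,
    ⟨c1, -(Kalpha * c1) - c2 - Kalphabar * c3, c3, h1,
      inO_sub (inO_sub (inO_neg (inO_mul inO_alpha h1)) h2) (inO_mul inO_alphabar h3), h3, ?_⟩,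
    ⟨c1, c2, Kalphabar * c1 - Kalpha * c2 - c3, h1, h2,
      inO_sub (inO_sub (inO_mul inO_alphabar h1) (inO_mul inO_alpha h2)) h3, ?_⟩⟩ <;>
  · funext i
    fin_cases i <;>
      simp [r1, r2, r3, Ke1, Ke2, Ke3, Matrix.mulVec, dotProduct,
        Fin.sum_univ_three, hbar] <;>
      first
        | ring1
        | linear_combination c2 * alpha_sq
        | linear_combination (-c2) * alpha_sq
        | linear_combination ((c3 - c1) / 2) * alpha_sq
        | linear_combination ((c1 - c3) / 2) * alpha_sq
        | linear_combination (-c1 / 2 - c2) * alpha_sq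


end
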